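/- arXiv:1512.08588 — 2 statements merged into one kernel-verified Lean document; each statement's English description precedes it below -/
import Mathlib

section
/- Let $H$ be a finite-dimensional bialgebra, and let $M$ be a Yetter-Drinfeld-Long bimodule over $H$. Applying the functor $G$ to $F(M)$ recovers the original structures: $(h\otimes\varepsilon)\cdot_F m = h\cdot m$, $\langle(\varepsilon\otimes\mathrm{id})m_{[-1]},h\rangle m_{[0]} = m\cdot h$, $(\mathrm{id}\otimes\varepsilon^*)(m_{[-1]})\otimes m_{[0]} = m_{(-1)}\otimes m_{(0)}$, and $\sum_i(1\otimes h^i)\cdot_F m\otimes h_i = m_{\langle 0\rangle}\otimes m_{\langle 1\rangle}$; i.e. $G\circ F=\mathrm{id}$ on objects. -/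
/- Common setup: Yetter-Drinfeld-Long bimodules over a bialgebra `H`, and
Yetter-Drinfeld modules over the tensor product bialgebra `H ⊗ H^*`. -/

open TensorProduct LinearMap Module

noncomputable section

namespace YDL

variable (k : Type) [Field k] (H : Type) [Ring H] [Bialgebra k H]
variable (M : Type) [AddCommGroup M] [Module k M]

/-- Data of an `H`-bimodule, `H`-bicomodule structure on `M`:
left action `aL`, right action `aR`, left coaction `cL`, right coaction `cR`. -/
structure LRData where
  aL : H ⊗[k] M →ₗ[k] M
  aR : M ⊗[k] H →ₗ[k] M
  cL : M →ₗ[k] H ⊗[k] M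
  cR : M →ₗ[k] M ⊗[k] H

variable {k H M}

/-- `M` is a left `H`-module. -/
structure IsLMod (D : LRData k H M) : Prop where
  one_act : ∀ m : M, D.aL (1 ⊗ₜ m) = m
  mul_act : ∀ (g h : H) (m : M), D.aL ((g * h) ⊗ₜ m) = D.aL (g ⊗ₜ D.aL (h ⊗ₜ m))

/-- `M` is a right `H`-module. -/
structure IsRMod (D : LRData k H M) : Prop where
  act_one : ∀ m : M, D.aR (m ⊗ₜ 1) = m
  act_mul : ∀ (m : M) (g h : H), D.aR (m ⊗ₜ (g * h)) = D.aR (D.aR (m ⊗ₜ g) ⊗ₜ h)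

/-- `M` is a left `H`-comodule. -/
structure IsLCom (D : LRData k H M) : Prop where
  coassoc : (TensorProduct.assoc k H H M).toLinearMap ∘ₗ map Coalgebra.comul LinearMap.id ∘ₗ D.cL
      = map LinearMap.id D.cL ∘ₗ D.cL
  counit : (TensorProduct.lid k M).toLinearMap ∘ₗ map Coalgebra.counit LinearMap.id ∘ₗ D.cL
      = LinearMap.id

/-- `M` is a right `H`-comodule. -/
structure IsRCom (D : LRData k H M) : Prop where
  coassoc : (TensorProduct.assoc k M H H).toLinearMap ∘ₗ map D.cR LinearMap.id ∘ₗ D.cR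
      = map LinearMap.id Coalgebra.comul ∘ₗ D.cR
  counit : (TensorProduct.rid k M).toLinearMap ∘ₗ map LinearMap.id Coalgebra.counit ∘ₗ D.cR
      = LinearMap.id

/-- Left-left Yetter-Drinfeld condition (1.1):
`(h₁·m)₍₋₁₎h₂ ⊗ (h₁·m)₍₀₎ = h₁m₍₋₁₎ ⊗ h₂·m₍₀₎`, as maps `H ⊗ M → H ⊗ M`. -/
def Cond1 (D : LRData k H M) : Prop :=
  map (LinearMap.mul' k H ∘ₗ (TensorProduct.comm k H H).toLinearMap) LinearMap.id ∘ₗ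
    (TensorProduct.assoc k H H M).symm.toLinearMap ∘ₗ
    map LinearMap.id (D.cL ∘ₗ D.aL) ∘ₗ
    (TensorProduct.assoc k H H M).toLinearMap ∘ₗ
    map ((TensorProduct.comm k H H).toLinearMap ∘ₗ Coalgebra.comul) LinearMap.id
  = map (LinearMap.mul' k H) D.aL ∘ₗ
    (tensorTensorTensorComm k H H H M).toLinearMap ∘ₗ map Coalgebra.comul D.cL

/-- Left-right Long condition (1.2): `(h·m)₍₀₎ ⊗ (h·m)₍₁₎ = h·m₍₀₎ ⊗ m₍₁₎`. -/
def Cond2 (D : LRData k H M) : Prop :=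
  D.cR ∘ₗ D.aL
  = map D.aL LinearMap.id ∘ₗ (TensorProduct.assoc k H M H).symm.toLinearMap ∘ₗ
      map LinearMap.id D.cR

/-- Right-right Yetter-Drinfeld condition (1.3):
`(m·h₂)₍₀₎ ⊗ h₁(m·h₂)₍₁₎ = m₍₀₎·h₁ ⊗ m₍₁₎h₂`, as maps `M ⊗ H → M ⊗ H`. -/
def Cond3 (D : LRData k H M) : Prop :=
  map LinearMap.id (LinearMap.mul' k H ∘ₗ (TensorProduct.comm k H H).toLinearMap) ∘ₗ
    (TensorProduct.assoc k M H H).toLinearMap ∘ₗ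
    map (D.cR ∘ₗ D.aR) LinearMap.id ∘ₗ
    (TensorProduct.assoc k M H H).symm.toLinearMap ∘ₗ
    map LinearMap.id ((TensorProduct.comm k H H).toLinearMap ∘ₗ Coalgebra.comul)
  = map D.aR (LinearMap.mul' k H) ∘ₗ
    (tensorTensorTensorComm k M H H H).toLinearMap ∘ₗ map D.cR Coalgebra.comul

/-- Right-left Long condition (1.4): `(m·h)₍₋₁₎ ⊗ (m·h)₍₀₎ = m₍₋₁₎ ⊗ m₍₀₎·h`. -/
def Cond4 (D : LRData k H M) : Prop :=
  D.cL ∘ₗ D.aR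
  = map LinearMap.id D.aR ∘ₗ (TensorProduct.assoc k H M H).toLinearMap ∘ₗ
      map D.cL LinearMap.id

/-- `M` with the data `D` is a Yetter-Drinfeld-Long bimodule: it is an `H`-bimodule
and an `H`-bicomodule satisfying the four compatibility conditions. -/
structure IsLR (D : LRData k H M) : Prop where
  lmod : IsLMod D
  rmod : IsRMod D
  lcom : IsLCom D
  rcom : IsRCom D
  bimod : ∀ (h h' : H) (m : M), D.aL (h ⊗ₜ D.aR (m ⊗ₜ h')) = D.aR (D.aL (h ⊗ₜ m) ⊗ₜ h')
  bicom : (TensorProduct.assoc k H M H).toLinearMap ∘ₗ map D.cL LinearMap.id ∘ₗ D.cR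
      = map LinearMap.id D.cR ∘ₗ D.cL
  cond1 : Cond1 D
  cond2 : Cond2 D
  cond3 : Cond3 D
  cond4 : Cond4 D

variable (k H M)

/-- The tensor product bialgebra `H ⊗ H^*` (as a vector space). -/
abbrev X := H ⊗[k] Module.Dual k H

/-- Convolution product on `H^*`: `⟨f*g, h⟩ = ⟨f,h₁⟩⟨g,h₂⟩`. -/
def convL : Module.Dual k H ⊗[k] Module.Dual k H →ₗ[k] Module.Dual k H :=
  (Coalgebra.comul (R := k) (A := H)).dualMap ∘ₗ TensorProduct.dualDistrib k H H

/-- Counit of `H^*`: evaluation at `1`. -/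
def εD : Module.Dual k H →ₗ[k] k := LinearMap.applyₗ (1 : H)

/-- Multiplication of the tensor product bialgebra `H ⊗ H^*`. -/
def μX : X k H ⊗[k] X k H →ₗ[k] X k H :=
  map (LinearMap.mul' k H) (convL k H) ∘ₗ
    (tensorTensorTensorComm k H (Module.Dual k H) H (Module.Dual k H)).toLinearMap

/-- Unit of `H ⊗ H^*`. -/
def oneX : X k H := 1 ⊗ₜ (Coalgebra.counit : Module.Dual k H)

/-- Counit of `H ⊗ H^*`. -/
def εX : X k H →ₗ[k] k := LinearMap.mul' k k ∘ₗ map Coalgebra.counit (εD k H)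

variable [FiniteDimensional k H]

/-- Comultiplication of `H^*` (for finite dimensional `H`): dual of multiplication. -/
def ΔD : Module.Dual k H →ₗ[k] Module.Dual k H ⊗[k] Module.Dual k H :=
  (TensorProduct.dualDistribEquiv k H H).symm.toLinearMap ∘ₗ (LinearMap.mul' k H).dualMap

/-- Comultiplication of the tensor product bialgebra `H ⊗ H^*`. -/
def ΔX : X k H →ₗ[k] X k H ⊗[k] X k H :=
  (tensorTensorTensorComm k H H (Module.Dual k H) (Module.Dual k H)).toLinearMap ∘ₗ
    map Coalgebra.comul (ΔD k H)

/-- The canonical element `∑ hᵢ ⊗ hⁱ ∈ H ⊗ H^*` (dual bases). -/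
def canel : H ⊗[k] Module.Dual k H := coevaluation k H 1

end YDL

end
namespace YDL

noncomputable section
open TensorProduct LinearMap Module

variable (k : Type) [Field k] (H : Type) [Ring H] [Bialgebra k H]
variable (M N P : Type) [AddCommGroup M] [Module k M] [AddCommGroup N] [Module k N]
  [AddCommGroup P] [Module k P]

/-- Data of a module-comodule structure on `M` over `H ⊗ H^*`. -/
structure YDData where
  act : X k H ⊗[k] M →ₗ[k] M
  coact : M →ₗ[k] X k H ⊗[k] M

variable {k H M N P}

/-- `M` is a left `H ⊗ H^*`-module (stated on pure tensors, which span `H ⊗ H^*`). -/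
structure IsXMod (E : YDData k H M) : Prop where
  one_act : ∀ m : M, E.act (oneX k H ⊗ₜ m) = m
  mul_act : ∀ (h h' : H) (f f' : Module.Dual k H) (m : M),
    E.act (((h * h') ⊗ₜ convL k H (f ⊗ₜ f')) ⊗ₜ m)
      = E.act ((h ⊗ₜ f) ⊗ₜ E.act ((h' ⊗ₜ f') ⊗ₜ m))

variable [FiniteDimensional k H]

/-- `M` is a left `H ⊗ H^*`-comodule. -/
structure IsXCom (E : YDData k H M) : Prop where
  coassoc : (TensorProduct.assoc k (X k H) (X k H) M).toLinearMap ∘ₗ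
      map (ΔX k H) LinearMap.id ∘ₗ E.coact = map LinearMap.id E.coact ∘ₗ E.coact
  counit : (TensorProduct.lid k M).toLinearMap ∘ₗ map (εX k H) LinearMap.id ∘ₗ E.coact
      = LinearMap.id

/-- The left-left Yetter-Drinfeld compatibility over `H ⊗ H^*`:
`(x₁·m)₍₋₁₎x₂ ⊗ (x₁·m)₍₀₎ = x₁m₍₋₁₎ ⊗ x₂·m₍₀₎`, as maps `(H ⊗ H^*) ⊗ M → (H ⊗ H^*) ⊗ M`. -/
def CondYD (E : YDData k H M) : Prop :=
  map (μX k H ∘ₗ (TensorProduct.comm k (X k H) (X k H)).toLinearMap) LinearMap.id ∘ₗ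
    (TensorProduct.assoc k (X k H) (X k H) M).symm.toLinearMap ∘ₗ
    map LinearMap.id (E.coact ∘ₗ E.act) ∘ₗ
    (TensorProduct.assoc k (X k H) (X k H) M).toLinearMap ∘ₗ
    map ((TensorProduct.comm k (X k H) (X k H)).toLinearMap ∘ₗ ΔX k H) LinearMap.id
  = map (μX k H) E.act ∘ₗ
    (tensorTensorTensorComm k (X k H) (X k H) (X k H) M).toLinearMap ∘ₗ map (ΔX k H) E.coact

/-- `M` is a left-left Yetter-Drinfeld module over `H ⊗ H^*`. -/
structure IsYD (E : YDData k H M) : Prop where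
  xmod : IsXMod E
  xcom : IsXCom E
  yd : CondYD E

/-! ### The functor `F : 𝓛𝓡(H) → ᴴ⊗ᴴ*YD` -/

/-- `f ⊗ m ↦ ⟨f, m₍₁₎⟩ m₍₀₎`, built from a right coaction `cR`. -/
def evR (cR : M →ₗ[k] M ⊗[k] H) : Module.Dual k H ⊗[k] M →ₗ[k] M :=
  (TensorProduct.lid k M).toLinearMap ∘ₗ map (contractLeft k H) LinearMap.id ∘ₗ
    (TensorProduct.assoc k (Module.Dual k H) H M).symm.toLinearMap ∘ₗ
    map LinearMap.id ((TensorProduct.comm k M H).toLinearMap ∘ₗ cR)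

/-- The `H ⊗ H^*`-action `(h ⊗ f) · m = ⟨f, m₍₁₎⟩ h · m₍₀₎` (formula (2.1)). -/
def Fact (D : LRData k H M) : X k H ⊗[k] M →ₗ[k] M :=
  D.aL ∘ₗ map LinearMap.id (evR D.cR) ∘ₗ
    (TensorProduct.assoc k H (Module.Dual k H) M).toLinearMap

/-- `m ↦ ∑ hⁱ ⊗ m · hᵢ`, built from a right action `aR`. -/
def insD (aR : M ⊗[k] H →ₗ[k] M) : M →ₗ[k] Module.Dual k H ⊗[k] M :=
  map LinearMap.id (aR ∘ₗ (TensorProduct.comm k H M).toLinearMap) ∘ₗ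
    (TensorProduct.assoc k (Module.Dual k H) H M).toLinearMap ∘ₗ
    TensorProduct.mk k (Module.Dual k H ⊗[k] H) M
      ((TensorProduct.comm k H (Module.Dual k H)) (canel k H))

/-- The `H ⊗ H^*`-coaction `ρ(m) = ∑ m₍₋₁₎ ⊗ hⁱ ⊗ m₍₀₎ · hᵢ` (formula (2.2)). -/
def Fco (D : LRData k H M) : M →ₗ[k] X k H ⊗[k] M :=
  (TensorProduct.assoc k H (Module.Dual k H) M).symm.toLinearMap ∘ₗ
    map LinearMap.id (insD D.aR) ∘ₗ D.cL

/-- The functor `F` on objects. -/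
def Fdata (D : LRData k H M) : YDData k H M := ⟨Fact D, Fco D⟩

/-! ### The functor `G : ᴴ⊗ᴴ*YD → 𝓛𝓡(H)` -/

variable (k H)

/-- `h ↦ h ⊗ ε`. -/
def ιH : H →ₗ[k] X k H :=
  (TensorProduct.mk k H (Module.Dual k H)).flip (Coalgebra.counit : Module.Dual k H)

/-- `f ↦ 1 ⊗ f`. -/
def ιD : Module.Dual k H →ₗ[k] X k H := TensorProduct.mk k H (Module.Dual k H) 1

/-- `h ⊗ f ↦ ε*(f) h`. -/
def πH : X k H →ₗ[k] H := (TensorProduct.rid k H).toLinearMap ∘ₗ map LinearMap.id (εD k H)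

/-- `(h ⊗ f) ⊗ h' ↦ ε(h)⟨f, h'⟩`. -/
def ξX : X k H ⊗[k] H →ₗ[k] k :=
  LinearMap.mul' k k ∘ₗ map Coalgebra.counit (contractLeft k H) ∘ₗ
    (TensorProduct.assoc k H (Module.Dual k H) H).toLinearMap

variable {k H}

/-- The restricted left `H`-action `h · m = (h ⊗ ε) · m`. -/
def gL (A : X k H ⊗[k] M →ₗ[k] M) : H ⊗[k] M →ₗ[k] M := A ∘ₗ map (ιH k H) LinearMap.id

/-- The right `H`-action `m · h = ⟨(ε ⊗ id) m₍₋₁₎, h⟩ m₍₀₎`. -/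
def gR (C : M →ₗ[k] X k H ⊗[k] M) : M ⊗[k] H →ₗ[k] M :=
  (TensorProduct.lid k M).toLinearMap ∘ₗ map (ξX k H) LinearMap.id ∘ₗ
    (TensorProduct.assoc k (X k H) H M).symm.toLinearMap ∘ₗ
    map LinearMap.id (TensorProduct.comm k M H).toLinearMap ∘ₗ
    (TensorProduct.assoc k (X k H) M H).toLinearMap ∘ₗ map C LinearMap.id

/-- The left `H`-coaction `ρ_L(m) = (id ⊗ ε*)(m₍₋₁₎) ⊗ m₍₀₎`. -/
def gcL (C : M →ₗ[k] X k H ⊗[k] M) : M →ₗ[k] H ⊗[k] M := map (πH k H) LinearMap.id ∘ₗ C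

/-- The right `H`-coaction `ρ_R(m) = ∑ (1 ⊗ hⁱ) · m ⊗ hᵢ`. -/
def gcR (A : X k H ⊗[k] M →ₗ[k] M) : M →ₗ[k] M ⊗[k] H :=
  map (A ∘ₗ map (ιD k H) LinearMap.id) LinearMap.id ∘ₗ
    (TensorProduct.assoc k (Module.Dual k H) M H).symm.toLinearMap ∘ₗ
    map LinearMap.id (TensorProduct.comm k H M).toLinearMap ∘ₗ
    (TensorProduct.assoc k (Module.Dual k H) H M).toLinearMap ∘ₗ
    map (TensorProduct.comm k H (Module.Dual k H)).toLinearMap LinearMap.id ∘ₗ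
    TensorProduct.mk k (H ⊗[k] Module.Dual k H) M (canel k H)

/-- The functor `G` on objects. -/
def Gdata (E : YDData k H M) : LRData k H M :=
  ⟨gL E.act, gR E.coact, gcL E.coact, gcR E.act⟩

end

end YDL
namespace YDL

noncomputable section
open TensorProduct LinearMap Module

variable {k : Type} [Field k] {H : Type} [Ring H] [Bialgebra k H]
variable {M N P : Type} [AddCommGroup M] [Module k M] [AddCommGroup N] [Module k N]
  [AddCommGroup P] [Module k P]

/-- The tensor product of two Yetter-Drinfeld-Long bimodule structures, with diagonal
actions and codiagonal coactions. -/
def tensorLR (D : LRData k H M) (D' : LRData k H N) : LRData k H (M ⊗[k] N) where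
  aL := map D.aL D'.aL ∘ₗ (tensorTensorTensorComm k H H M N).toLinearMap ∘ₗ
    map Coalgebra.comul LinearMap.id
  aR := map D.aR D'.aR ∘ₗ (tensorTensorTensorComm k M N H H).toLinearMap ∘ₗ
    map LinearMap.id Coalgebra.comul
  cL := map (LinearMap.mul' k H) LinearMap.id ∘ₗ
    (tensorTensorTensorComm k H M H N).toLinearMap ∘ₗ map D.cL D'.cL
  cR := map LinearMap.id (LinearMap.mul' k H) ∘ₗ
    (tensorTensorTensorComm k M H N H).toLinearMap ∘ₗ map D.cR D'.cR

variable [FiniteDimensional k H]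

/-- The tensor product of two Yetter-Drinfeld module structures over `H ⊗ H^*`. -/
def tensorYD (E : YDData k H M) (E' : YDData k H N) : YDData k H (M ⊗[k] N) where
  act := map E.act E'.act ∘ₗ (tensorTensorTensorComm k (X k H) (X k H) M N).toLinearMap ∘ₗ
    map (ΔX k H) LinearMap.id
  coact := map (μX k H) LinearMap.id ∘ₗ
    (tensorTensorTensorComm k (X k H) M (X k H) N).toLinearMap ∘ₗ map E.coact E'.coact

/-- A linear map `φ : M → N` is a morphism of Yetter-Drinfeld-Long bimodules
(`H`-bilinear and `H`-bicolinear). -/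
def LRHom (D : LRData k H M) (D' : LRData k H N) (φ : M →ₗ[k] N) : Prop :=
  φ ∘ₗ D.aL = D'.aL ∘ₗ map LinearMap.id φ ∧
  φ ∘ₗ D.aR = D'.aR ∘ₗ map φ LinearMap.id ∧
  D'.cL ∘ₗ φ = map LinearMap.id φ ∘ₗ D.cL ∧
  D'.cR ∘ₗ φ = map φ LinearMap.id ∘ₗ D.cR

/-- A linear map `φ : M → N` is a morphism of Yetter-Drinfeld modules over `H ⊗ H^*`
(`H ⊗ H^*`-linear and colinear). -/
def YDHom (E : YDData k H M) (E' : YDData k H N) (φ : M →ₗ[k] N) : Prop :=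
  φ ∘ₗ E.act = E'.act ∘ₗ map LinearMap.id φ ∧
  E'.coact ∘ₗ φ = map LinearMap.id φ ∘ₗ E.coact

/-- The braiding of `𝓛𝓡(H)`: `m ⊗ n ↦ m₍₋₁₎·n₍₀₎ ⊗ m₍₀₎·n₍₁₎`. -/
def cLR (D : LRData k H M) (D' : LRData k H N) : M ⊗[k] N →ₗ[k] N ⊗[k] M :=
  map D'.aL D.aR ∘ₗ (tensorTensorTensorComm k H M N H).toLinearMap ∘ₗ map D.cL D'.cR

/-- The inverse braiding of `𝓛𝓡(H)` (`T` is the inverse of the antipode):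
`n ⊗ m ↦ m₍₀₎·S⁻¹(n₍₁₎) ⊗ S⁻¹(m₍₋₁₎)·n₍₀₎`. -/
def cLRinv (D : LRData k H M) (D' : LRData k H N) (T : H →ₗ[k] H) :
    N ⊗[k] M →ₗ[k] M ⊗[k] N :=
  map D.aR D'.aL ∘ₗ
    (TensorProduct.comm k (H ⊗[k] N) (M ⊗[k] H)).toLinearMap ∘ₗ
    (tensorTensorTensorComm k H M N H).toLinearMap ∘ₗ
    (TensorProduct.comm k (N ⊗[k] H) (H ⊗[k] M)).toLinearMap ∘ₗ
    map (map LinearMap.id T) (map T LinearMap.id) ∘ₗ map D'.cR D.cL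

/-- The braiding of the Yetter-Drinfeld category over `H ⊗ H^*`:
`m ⊗ n ↦ m₍₋₁₎·n ⊗ m₍₀₎`, built from the coaction on `M` and the action on `N`. -/
def cYD (C : M →ₗ[k] X k H ⊗[k] M) (A' : X k H ⊗[k] N →ₗ[k] N) : M ⊗[k] N →ₗ[k] N ⊗[k] M :=
  map A' LinearMap.id ∘ₗ (TensorProduct.assoc k (X k H) N M).symm.toLinearMap ∘ₗ
    map LinearMap.id (TensorProduct.comm k M N).toLinearMap ∘ₗ
    (TensorProduct.assoc k (X k H) M N).toLinearMap ∘ₗ map C LinearMap.id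

end

end YDL
namespace YDL
open TensorProduct LinearMap Module

set_option linter.unusedSectionVars false

noncomputable section
open TensorProduct LinearMap Module
variable {k : Type} [Field k] {H : Type} [Ring H] [Bialgebra k H]
  [FiniteDimensional k H] {M : Type} [AddCommGroup M] [Module k M]

/-- `f ⊗ t ↦ ⟨f, t₂⟩ t₁` on `M ⊗ H`. -/
def eaux (f : Dual k H) : M ⊗[k] H →ₗ[k] M :=
  (TensorProduct.lid k M).toLinearMap ∘ₗ map (contractLeft k H) LinearMap.id ∘ₗ
    (TensorProduct.assoc k (Dual k H) H M).symm.toLinearMap ∘ₗ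
    TensorProduct.mk k (Dual k H) (H ⊗[k] M) f ∘ₗ (TensorProduct.comm k M H).toLinearMap

lemma evR_eaux (cR : M →ₗ[k] M ⊗[k] H) (f : Dual k H) (m : M) :
    evR cR (f ⊗ₜ m) = eaux f (cR m) := by
  simp [evR, eaux]

lemma eaux_tmul (f : Dual k H) (m : M) (h : H) : eaux f (m ⊗ₜ h) = f h • m := by
  simp [eaux]

lemma evR_counit (cR : M →ₗ[k] M ⊗[k] H)
    (hc : (TensorProduct.rid k M).toLinearMap ∘ₗ map LinearMap.id Coalgebra.counit ∘ₗ cR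
      = LinearMap.id) (m : M) :
    evR cR ((Coalgebra.counit : Dual k H) ⊗ₜ m) = m := by
  rw [evR_eaux]
  have key : ∀ t : M ⊗[k] H, eaux (Coalgebra.counit : Dual k H) t
      = (TensorProduct.rid k M) ((map LinearMap.id Coalgebra.counit) t) := by
    intro t
    induction t using TensorProduct.induction_on with
    | zero => simp
    | tmul x y => simp [eaux_tmul]
    | add x y hx hy => simp_all [map_add]
  rw [key]
  have h2 := congrArg (fun (g : M →ₗ[k] M) => g m) hc
  simpa using h2

lemma comp1 (D : LRData k H M) (hD : IsLR D) : gL (Fact D) = D.aL := by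
  apply TensorProduct.ext'
  intro h m
  have : gL (Fact D) (h ⊗ₜ m) = D.aL (h ⊗ₜ evR D.cR ((Coalgebra.counit : Dual k H) ⊗ₜ m)) := by
    simp [gL, Fact, ιH]
  rw [this, evR_counit D.cR hD.rcom.counit]

lemma sum_eaux_coord (t : M ⊗[k] H) :
    ∑ i : Basis.ofVectorSpaceIndex k H,
      (eaux ((Basis.ofVectorSpace k H).coord i) t) ⊗ₜ[k] (Basis.ofVectorSpace k H) i = t := by
  induction t using TensorProduct.induction_on with
  | zero => simp
  | tmul x y =>
    simp only [eaux_tmul, Basis.coord_apply, smul_tmul, ← TensorProduct.tmul_sum]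
    rw [Basis.sum_repr]
  | add x y hx hy => simp only [map_add, add_tmul, Finset.sum_add_distrib, hx, hy]

set_option synthInstance.maxHeartbeats 1000000 in
set_option maxHeartbeats 2000000 in
lemma comp4 (D : LRData k H M) (hD : IsLR D) : gcR (Fact D) = D.cR := by
  apply LinearMap.ext; intro m
  have e1 : ∀ f : Dual k H, Fact D ((ιD k H f) ⊗ₜ m) = eaux f (D.cR m) := by
    intro f
    have : Fact D ((ιD k H f) ⊗ₜ m) = D.aL (1 ⊗ₜ evR D.cR (f ⊗ₜ m)) := by
      simp [Fact, ιD]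
    rw [this, hD.lmod.one_act, evR_eaux]
  have : gcR (Fact D) m = ∑ i : Basis.ofVectorSpaceIndex k H,
      (eaux ((Basis.ofVectorSpace k H).coord i) (D.cR m)) ⊗ₜ[k] (Basis.ofVectorSpace k H) i := by
    simp [gcR, canel, coevaluation_apply_one, sum_tmul, tmul_sum, map_sum, ← e1, ιD]
  rw [this, sum_eaux_coord]

set_option synthInstance.maxHeartbeats 1000000 in
set_option maxHeartbeats 2000000 in
lemma insD_apply (aR : M ⊗[k] H →ₗ[k] M) (m : M) :
    insD aR m = ∑ i : Basis.ofVectorSpaceIndex k H,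
      (Basis.ofVectorSpace k H).coord i ⊗ₜ aR (m ⊗ₜ (Basis.ofVectorSpace k H) i) := by
  simp [insD, canel, coevaluation_apply_one, sum_tmul, tmul_sum, map_sum]

set_option synthInstance.maxHeartbeats 1000000 in
set_option maxHeartbeats 2000000 in
lemma comp3 (D : LRData k H M) (hD : IsLR D) : gcL (Fco D) = D.cL := by
  apply LinearMap.ext; intro m
  have key : ∀ t : H ⊗[k] M,
      map (πH k H) LinearMap.id ((TensorProduct.assoc k H (Dual k H) M).symm
        (map LinearMap.id (insD D.aR) t)) = t := by
    intro t
    induction t using TensorProduct.induction_on with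
    | zero => simp
    | tmul g n =>
      simp only [map_tmul, id_coe, _root_.id, insD_apply, tmul_sum, map_sum, assoc_symm_tmul,
        πH, εD]
      simp only [coe_comp, Function.comp_apply, map_tmul, id_coe, _root_.id,
        LinearEquiv.coe_coe, applyₗ_apply_apply, rid_tmul, smul_tmul, ← _root_.map_smul,
        ← tmul_smul, ← map_sum, ← tmul_sum, Basis.coord_apply]
      rw [Basis.sum_repr, hD.rmod.act_one]
    | add x y hx hy => simp_all [map_add]
  have e2 : gcL (Fco D) m = map (πH k H) LinearMap.id ((TensorProduct.assoc k H (Dual k H) M).symm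
        (map LinearMap.id (insD D.aR) (D.cL m))) := by simp [gcL, Fco]
  rw [e2, key]

set_option synthInstance.maxHeartbeats 1000000 in
set_option maxHeartbeats 2000000 in
lemma comp2 (D : LRData k H M) (hD : IsLR D) : gR (Fco D) = D.aR := by
  apply TensorProduct.ext'; intro m h
  have key : ∀ t : H ⊗[k] M,
      (TensorProduct.lid k M) ((map (ξX k H) LinearMap.id)
        ((TensorProduct.assoc k (X k H) H M).symm ((map LinearMap.id
          (TensorProduct.comm k M H).toLinearMap) ((TensorProduct.assoc k (X k H) M H)
            (((TensorProduct.assoc k H (Dual k H) M).symm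
              ((map LinearMap.id (insD D.aR)) t)) ⊗ₜ[k] h)))))
      = D.aR ((TensorProduct.lid k M) ((map Coalgebra.counit LinearMap.id) t) ⊗ₜ[k] h) := by
    intro t
    induction t using TensorProduct.induction_on with
    | zero => simp
    | tmul g n =>
      simp only [map_tmul, id_coe, _root_.id, insD_apply, tmul_sum, map_sum, assoc_symm_tmul,
        sum_tmul, assoc_tmul, comm_tmul, lid_tmul, ξX, LinearEquiv.coe_coe, coe_comp,
        Function.comp_apply, mul'_apply, contractLeft_apply]
      simp only [mul_smul, ← _root_.map_smul, ← tmul_smul, smul_tmul', ← map_sum,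
        ← tmul_sum, ← Finset.smul_sum, Basis.coord_apply]
      rw [Basis.sum_repr, tmul_smul, ← smul_tmul']
    | add x y hx hy => simp_all [map_add, add_tmul]
  have e0 : gR (Fco D) (m ⊗ₜ h) = D.aR ((TensorProduct.lid k M)
      ((map Coalgebra.counit LinearMap.id) (D.cL m)) ⊗ₜ[k] h) := by
    rw [← key]
    simp [gR, Fco]
  rw [e0]
  have h2 := congrArg (fun (g : M →ₗ[k] M) => g m) hD.lcom.counit
  simp only [coe_comp, Function.comp_apply, LinearEquiv.coe_coe, id_coe, _root_.id] at h2
  rw [h2]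

end

/-- applying `G` to `F(M)` recovers the original Yetter-Drinfeld-Long
structures, i.e. `G ∘ F = id` on objects. -/
theorem statement17 {k : Type} [Field k] {H : Type} [Ring H] [Bialgebra k H]
    [FiniteDimensional k H] {M : Type} [AddCommGroup M] [Module k M]
    (D : LRData k H M) (hD : IsLR D) :
    Gdata (Fdata D) = D := by
  simp only [Gdata, Fdata]
  rw [comp1 D hD, comp2 D hD, comp3 D hD, comp4 D hD]

end YDL
end

section
/- Let $H$ be a Hopf algebra with bijective antipode and let $M$, $N$, $P$ be Yetter-Drinfeld-Long bimodules over $H$. The braiding $c_{M,N}(m\otimes n)=m_{(-1)}\cdot n_{\langle 0\rangle}\otimes m_{(0)}\cdot n_{\langle 1\rangle}$ satisfies the hexagon identities: $c_{M,N\otimes P} = (\mathrm{id}_N\otimes c_{M,P})\circ(c_{M,N}\otimes\mathrm{id}_P)$ and $c_{M\otimes N,P} = (c_{M,P}\otimes\mathrm{id}_N)\circ(\mathrm{id}_M\otimes c_{N,P})$. -/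
/- Common setup: Yetter-Drinfeld-Long bimodules over a bialgebra `H`, and
Yetter-Drinfeld modules over the tensor product bialgebra `H ⊗ H^*`. -/

open TensorProduct LinearMap Module

namespace YDL
open TensorProduct LinearMap Module


noncomputable section
open TensorProduct LinearMap Module

variable {k : Type} [Field k] {H : Type} [Ring H] [Bialgebra k H]
variable {M N P : Type} [AddCommGroup M] [Module k M] [AddCommGroup N] [Module k N]
  [AddCommGroup P] [Module k P]

/-- Normal form target for the first hexagon identity. -/
def Psi1 (D : LRData k H M) (D' : LRData k H N) (D'' : LRData k H P) :
    (H ⊗[k] (H ⊗[k] M)) ⊗[k] ((N ⊗[k] H) ⊗[k] (P ⊗[k] H)) →ₗ[k] (N ⊗[k] P) ⊗[k] M :=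
  map (map D'.aL D''.aL ∘ₗ (tensorTensorTensorComm k H H N P).toLinearMap)
      (D.aR ∘ₗ map LinearMap.id (LinearMap.mul' k H)) ∘ₗ
  (tensorTensorTensorComm k (H ⊗[k] H) M (N ⊗[k] P) (H ⊗[k] H)).toLinearMap ∘ₗ
  map (TensorProduct.assoc k H H M).symm.toLinearMap
      (tensorTensorTensorComm k N H P H).toLinearMap

/-- Normal form target for the second hexagon identity. -/
def Psi2 (D : LRData k H M) (D' : LRData k H N) (D'' : LRData k H P) :
    ((H ⊗[k] M) ⊗[k] (H ⊗[k] N)) ⊗[k] (P ⊗[k] (H ⊗[k] H)) →ₗ[k] P ⊗[k] (M ⊗[k] N) :=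
  map (D''.aL ∘ₗ map (LinearMap.mul' k H) LinearMap.id)
      (map D.aR D'.aR ∘ₗ (tensorTensorTensorComm k M N H H).toLinearMap) ∘ₗ
  (tensorTensorTensorComm k (H ⊗[k] H) (M ⊗[k] N) P (H ⊗[k] H)).toLinearMap ∘ₗ
  map (tensorTensorTensorComm k H M H N).toLinearMap LinearMap.id

lemma hex1_lhs (D : LRData k H M) (D' : LRData k H N) (D'' : LRData k H P) :
    cLR D (tensorLR D' D'') =
      Psi1 D D' D'' ∘ₗ
        map ((TensorProduct.assoc k H H M).toLinearMap ∘ₗ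
              map Coalgebra.comul LinearMap.id ∘ₗ D.cL)
          (map D'.cR D''.cR) := by
  apply TensorProduct.ext'
  intro m y
  induction y using TensorProduct.induction_on with
  | zero => simp only [zero_tmul, tmul_zero, LinearMap.map_zero, LinearEquiv.map_zero]
  | add a b ha hb => simp only [tmul_add, map_add, ha, hb]
  | tmul n p =>
  simp only [cLR, tensorLR, Psi1, coe_comp, Function.comp_apply, map_tmul,
    LinearEquiv.coe_coe, id_coe, id_eq]
  generalize D'.cR n = v
  generalize D''.cR p = w
  generalize D.cL m = u
  induction v using TensorProduct.induction_on with
  | zero => simp only [zero_tmul, tmul_zero, LinearMap.map_zero, LinearEquiv.map_zero]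
  | add a b ha hb => simp only [add_tmul, tmul_add, map_add, ha, hb]
  | tmul n1 g =>
  induction w using TensorProduct.induction_on with
  | zero => simp only [zero_tmul, tmul_zero, LinearMap.map_zero, LinearEquiv.map_zero]
  | add a b ha hb => simp only [add_tmul, tmul_add, map_add, ha, hb]
  | tmul p1 c =>
  induction u using TensorProduct.induction_on with
  | zero => simp only [zero_tmul, tmul_zero, LinearMap.map_zero, LinearEquiv.map_zero]
  | add a b ha hb => simp only [add_tmul, tmul_add, map_add, ha, hb]
  | tmul h m1 =>
  simp only [map_tmul, tensorTensorTensorComm_tmul, coe_comp, Function.comp_apply,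
    LinearEquiv.coe_coe, id_coe, id_eq, LinearMap.mul'_apply, assoc_tmul,
    assoc_symm_tmul, LinearEquiv.symm_apply_apply]

lemma hex1_rhs (D : LRData k H M) (D' : LRData k H N) (D'' : LRData k H P)
    (hD : IsLR D) :
    (TensorProduct.assoc k N P M).symm.toLinearMap ∘ₗ
        map LinearMap.id (cLR D D'') ∘ₗ (TensorProduct.assoc k N M P).toLinearMap ∘ₗ
        map (cLR D D') LinearMap.id ∘ₗ (TensorProduct.assoc k M N P).symm.toLinearMap =
      Psi1 D D' D'' ∘ₗ map (map LinearMap.id D.cL ∘ₗ D.cL) (map D'.cR D''.cR) := by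
  apply TensorProduct.ext'
  intro m y
  induction y using TensorProduct.induction_on with
  | zero => simp only [zero_tmul, tmul_zero, LinearMap.map_zero, LinearEquiv.map_zero]
  | add a b ha hb => simp only [tmul_add, map_add, ha, hb]
  | tmul n p =>
  simp only [cLR, coe_comp, Function.comp_apply, map_tmul, LinearEquiv.coe_coe,
    id_coe, id_eq, assoc_symm_tmul]
  generalize D'.cR n = v
  generalize D.cL m = u
  induction v using TensorProduct.induction_on with
  | zero => simp only [zero_tmul, tmul_zero, LinearMap.map_zero, LinearEquiv.map_zero]
  | add a b ha hb => simp only [add_tmul, tmul_add, map_add, ha, hb]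
  | tmul n1 g =>
  induction u using TensorProduct.induction_on with
  | zero => simp only [zero_tmul, tmul_zero, LinearMap.map_zero, LinearEquiv.map_zero]
  | add a b ha hb => simp only [add_tmul, tmul_add, map_add, ha, hb]
  | tmul h m1 =>
  simp only [map_tmul, tensorTensorTensorComm_tmul, assoc_tmul, id_coe, id_eq,
    coe_comp, Function.comp_apply, LinearEquiv.coe_coe]
  have h4 : D.cL (D.aR (m1 ⊗ₜ[k] g)) =
      map LinearMap.id D.aR ((TensorProduct.assoc k H M H) (D.cL m1 ⊗ₜ[k] g)) := by
    have := LinearMap.congr_fun hD.cond4 (m1 ⊗ₜ[k] g)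
    simpa [Cond4] using this
  rw [h4]
  generalize D.cL m1 = s
  induction s using TensorProduct.induction_on with
  | zero => simp only [zero_tmul, tmul_zero, LinearMap.map_zero, LinearEquiv.map_zero]
  | add a b ha hb => simp only [add_tmul, tmul_add, map_add, ha, hb]
  | tmul a m2 =>
  generalize D''.cR p = w
  induction w using TensorProduct.induction_on with
  | zero => simp only [zero_tmul, tmul_zero, LinearMap.map_zero, LinearEquiv.map_zero]
  | add a b ha hb => simp only [add_tmul, tmul_add, map_add, ha, hb]
  | tmul p1 c =>
  simp only [map_tmul, assoc_tmul, tensorTensorTensorComm_tmul, id_coe, id_eq,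
    coe_comp, Function.comp_apply, LinearEquiv.coe_coe]
  rw [show D.aR (D.aR (m2 ⊗ₜ[k] g) ⊗ₜ[k] c) = D.aR (m2 ⊗ₜ[k] (g * c)) from
    (hD.rmod.act_mul m2 g c).symm]
  simp [Psi1, LinearMap.mul'_apply]

lemma hex2_lhs (D : LRData k H M) (D' : LRData k H N) (D'' : LRData k H P) :
    cLR (tensorLR D D') D'' =
      Psi2 D D' D'' ∘ₗ
        map (map D.cL D'.cL) (map LinearMap.id Coalgebra.comul ∘ₗ D''.cR) := by
  apply TensorProduct.ext_threefold
  intro m n p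
  simp only [cLR, tensorLR, Psi2, coe_comp, Function.comp_apply, map_tmul,
    LinearEquiv.coe_coe, id_coe, id_eq]
  generalize D.cL m = u
  generalize D'.cL n = u'
  generalize D''.cR p = w
  induction u using TensorProduct.induction_on with
  | zero => simp only [zero_tmul, tmul_zero, LinearMap.map_zero, LinearEquiv.map_zero]
  | add a b ha hb => simp only [add_tmul, tmul_add, map_add, ha, hb]
  | tmul h m0 =>
  induction u' using TensorProduct.induction_on with
  | zero => simp only [zero_tmul, tmul_zero, LinearMap.map_zero, LinearEquiv.map_zero]
  | add a b ha hb => simp only [add_tmul, tmul_add, map_add, ha, hb]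
  | tmul g n0 =>
  induction w using TensorProduct.induction_on with
  | zero => simp only [zero_tmul, tmul_zero, LinearMap.map_zero, LinearEquiv.map_zero]
  | add a b ha hb => simp only [add_tmul, tmul_add, map_add, ha, hb]
  | tmul p0 c =>
  simp only [map_tmul, tensorTensorTensorComm_tmul, coe_comp, Function.comp_apply,
    LinearEquiv.coe_coe, id_coe, id_eq, LinearMap.mul'_apply]

lemma hex2_rhs (D : LRData k H M) (D' : LRData k H N) (D'' : LRData k H P)
    (hD'' : IsLR D'') :
    (TensorProduct.assoc k P M N).toLinearMap ∘ₗ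
        map (cLR D D'') LinearMap.id ∘ₗ (TensorProduct.assoc k M P N).symm.toLinearMap ∘ₗ
        map LinearMap.id (cLR D' D'') ∘ₗ (TensorProduct.assoc k M N P).toLinearMap =
      Psi2 D D' D'' ∘ₗ
        map (map D.cL D'.cL)
          ((TensorProduct.assoc k P H H).toLinearMap ∘ₗ
            map D''.cR LinearMap.id ∘ₗ D''.cR) := by
  apply TensorProduct.ext_threefold
  intro m n p
  simp only [cLR, coe_comp, Function.comp_apply, map_tmul, LinearEquiv.coe_coe,
    id_coe, id_eq, assoc_tmul]
  generalize D'.cL n = u'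
  induction u' using TensorProduct.induction_on with
  | zero => simp only [zero_tmul, tmul_zero, LinearMap.map_zero, LinearEquiv.map_zero]
  | add a b ha hb => simp only [add_tmul, tmul_add, map_add, ha, hb]
  | tmul g n0 =>
  generalize D''.cR p = w
  induction w using TensorProduct.induction_on with
  | zero => simp only [zero_tmul, tmul_zero, LinearMap.map_zero, LinearEquiv.map_zero]
  | add a b ha hb => simp only [add_tmul, tmul_add, map_add, ha, hb]
  | tmul p0 c =>
  simp only [map_tmul, assoc_symm_tmul, id_coe, id_eq, coe_comp, Function.comp_apply,
    LinearEquiv.coe_coe, tensorTensorTensorComm_tmul]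
  have h2 : D''.cR (D''.aL (g ⊗ₜ[k] p0)) =
      map D''.aL LinearMap.id ((TensorProduct.assoc k H P H).symm (g ⊗ₜ[k] D''.cR p0)) := by
    have := LinearMap.congr_fun hD''.cond2 (g ⊗ₜ[k] p0)
    simpa [Cond2] using this
  rw [h2]
  generalize D''.cR p0 = s
  induction s using TensorProduct.induction_on with
  | zero => simp only [zero_tmul, tmul_zero, LinearMap.map_zero, LinearEquiv.map_zero]
  | add a b ha hb => simp only [add_tmul, tmul_add, map_add, ha, hb]
  | tmul p1 c1 =>
  generalize D.cL m = u
  induction u using TensorProduct.induction_on with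
  | zero => simp only [zero_tmul, tmul_zero, LinearMap.map_zero, LinearEquiv.map_zero]
  | add a b ha hb => simp only [add_tmul, tmul_add, map_add, ha, hb]
  | tmul h m0 =>
  simp only [map_tmul, assoc_symm_tmul, assoc_tmul, tensorTensorTensorComm_tmul,
    id_coe, id_eq, coe_comp, Function.comp_apply, LinearEquiv.coe_coe]
  rw [show D''.aL (h ⊗ₜ[k] D''.aL (g ⊗ₜ[k] p1)) = D''.aL ((h * g) ⊗ₜ[k] p1) from
    (hD''.lmod.mul_act h g p1).symm]
  simp [Psi2, LinearMap.mul'_apply]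

end

/-- the braiding of `𝓛𝓡(H)` satisfies the hexagon identities. -/
theorem statement19 {k : Type} [Field k] {H : Type} [Ring H] [HopfAlgebra k H]
    {M N P : Type} [AddCommGroup M] [Module k M] [AddCommGroup N] [Module k N]
    [AddCommGroup P] [Module k P]
    (hbij : Function.Bijective (HopfAlgebra.antipode (R := k) (A := H)))
    (D : LRData k H M) (D' : LRData k H N) (D'' : LRData k H P)
    (hD : IsLR D) (hD' : IsLR D') (hD'' : IsLR D'') :
    cLR D (tensorLR D' D'')
      = (TensorProduct.assoc k N P M).symm.toLinearMap ∘ₗ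
        map LinearMap.id (cLR D D'') ∘ₗ (TensorProduct.assoc k N M P).toLinearMap ∘ₗ
        map (cLR D D') LinearMap.id ∘ₗ (TensorProduct.assoc k M N P).symm.toLinearMap ∧
    cLR (tensorLR D D') D''
      = (TensorProduct.assoc k P M N).toLinearMap ∘ₗ
        map (cLR D D'') LinearMap.id ∘ₗ (TensorProduct.assoc k M P N).symm.toLinearMap ∘ₗ
        map LinearMap.id (cLR D' D'') ∘ₗ (TensorProduct.assoc k M N P).toLinearMap := by
  constructor
  · rw [hex1_lhs D D' D'', hex1_rhs D D' D'' hD, hD.lcom.coassoc]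
  · rw [hex2_lhs D D' D'', hex2_rhs D D' D'' hD'', ← hD''.rcom.coassoc]

end YDL
end
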